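/- Case (VI)(iii), classification: Assume that for every character η of Γ with η|_Λ = ξ, the degree-r polynomial P_η(c) := c₀·c₁·⋯·c_{r−1} − 1 in the variable c = c₀ has r distinct roots. Then every irreducible case-VI representation is isomorphic (via a linear isomorphism intertwining X, Y and every ρ(h)) to L(η, c) for some character η of Γ with η|_Λ = ξ and some root c of P_η. -/

import Mathlib

noncomputable section

/-- `(V, ρ, X, Y)` is a representation of the common part of the rank-2 algebra `A(ξ)`:
`ρ` is a group homomorphism (recorded via multiplicativity and unitality),
`ρ(h)∘X = χ₁(h)·(X∘ρ(h))` and `ρ(h)∘Y = χ₂(h)·(Y∘ρ(h))` for all `h ∈ Γ`, and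
`ρ(g) = ξ(g)·id` for all `g ∈ Λ`. -/
def IsRep {Γ : Type*} [CommGroup Γ] (χ₁ χ₂ : Γ →* ℂˣ) (Λ : Subgroup Γ) (ξ : ↥Λ →* ℂˣ)
    {V : Type*} [AddCommGroup V] [Module ℂ V]
    (ρ : Γ → Module.End ℂ V) (X Y : Module.End ℂ V) : Prop :=
  (∀ a b : Γ, ρ (a * b) = ρ a * ρ b) ∧ ρ 1 = 1 ∧
  (∀ h : Γ, ρ h * X = (χ₁ h : ℂ) • (X * ρ h)) ∧
  (∀ h : Γ, ρ h * Y = (χ₂ h : ℂ) • (Y * ρ h)) ∧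
  ∀ g : Λ, ρ (g : Γ) = (ξ g : ℂ) • (1 : Module.End ℂ V)

/-- A subspace `W` is stable under `X`, `Y` and all `ρ(h)`. -/
def Stable2 {Γ : Type*} {V : Type*} [AddCommGroup V] [Module ℂ V]
    (ρ : Γ → Module.End ℂ V) (X Y : Module.End ℂ V) (W : Submodule ℂ V) : Prop :=
  (∀ v ∈ W, X v ∈ W) ∧ (∀ v ∈ W, Y v ∈ W) ∧ ∀ h : Γ, ∀ v ∈ W, ρ h v ∈ W

/-- Irreducibility: `V ≠ 0` and the only subspaces stable under `X`, `Y` and all `ρ(h)`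
are `0` and `V`. -/
def Irred2 {Γ : Type*} {V : Type*} [AddCommGroup V] [Module ℂ V]
    (ρ : Γ → Module.End ℂ V) (X Y : Module.End ℂ V) : Prop :=
  (∃ v : V, v ≠ 0) ∧ ∀ W : Submodule ℂ V, Stable2 ρ X Y W → W = ⊥ ∨ W = ⊤

/-- The sequence `c_i` defined by `c₀ = c` and
`c_i = q·(c_{i−1} + ν − ν·q^{2(i−1)}·γ)` for `i ≥ 1`. -/
def cseq (q ν γ c : ℂ) : ℕ → ℂ
  | 0 => c
  | i + 1 => q * (cseq q ν γ c i + ν - ν * q ^ (2 * i) * γ)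

/-- `(V, ρ, X, Y)` is a case-VI representation: a representation with in addition
`X^r = id`, `Y^r = id` and `X∘Y = q⁻¹·(Y∘X) + ν·(ρ(g₁g₂) − id)`, where `q = χ₁(g₁)`. -/
def IsRepVI {Γ : Type*} [CommGroup Γ] (g₁ g₂ : Γ) (χ₁ χ₂ : Γ →* ℂˣ) (ν : ℂ)
    (Λ : Subgroup Γ) (ξ : ↥Λ →* ℂˣ) (r : ℕ)
    {V : Type*} [AddCommGroup V] [Module ℂ V]
    (ρ : Γ → Module.End ℂ V) (X Y : Module.End ℂ V) : Prop :=
  IsRep χ₁ χ₂ Λ ξ ρ X Y ∧ X ^ r = 1 ∧ Y ^ r = 1 ∧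
    X * Y = (((χ₁ g₁ : ℂˣ) : ℂ))⁻¹ • (Y * X) + ν • (ρ (g₁ * g₂) - 1)

/-- The action of `h ∈ Γ` on `L(η, c)`, with `ρ(h)·f_i = η(h)·χ₁(h)^i·f_i` on the basis
`(f_i)_{i ∈ ℤ/rℤ}` of `ℤ/rℤ → ℂ`. -/
def wRho (r : ℕ) {Γ : Type*} [CommGroup Γ] (χ₁ η : Γ →* ℂˣ) (h : Γ) :
    Module.End ℂ (ZMod r → ℂ) where
  toFun v := fun i => (η h : ℂ) * (χ₁ h : ℂ) ^ i.val * v i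
  map_add' v w := by funext i; simp [mul_add]
  map_smul' a v := by funext i; simp [smul_eq_mul]; ring

/-- The operator `X` on `L(η, c)`, with `X·f_i = f_{i+1}` (indices modulo `r`). -/
def wX (r : ℕ) : Module.End ℂ (ZMod r → ℂ) where
  toFun v := fun i => v (i - 1)
  map_add' _ _ := rfl
  map_smul' _ _ := rfl

/-- The operator `Y` on `L(η, c)`, with `Y·f_i = c_i·f_{i−1}` (indices modulo `r`,
the index of `c` being read off via the canonical representative in `{0, …, r−1}`). -/
def wY (r : ℕ) (cs : ℕ → ℂ) : Module.End ℂ (ZMod r → ℂ) where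
  toFun v := fun j => cs ((j + 1 : ZMod r).val) * v (j + 1)
  map_add' v w := by funext j; simp [mul_add]
  map_smul' a v := by funext j; simp [smul_eq_mul]; ring

lemma common_eig {V : Type*} [AddCommGroup V] [Module ℂ V] [FiniteDimensional ℂ V]
    (L : List (Module.End ℂ V)) (hc : ∀ f ∈ L, ∀ g ∈ L, f * g = g * f) :
    ∀ W : Submodule ℂ V, W ≠ ⊥ → (∀ f ∈ L, ∀ v ∈ W, f v ∈ W) →
    ∃ v : V, v ∈ W ∧ v ≠ 0 ∧ ∀ f ∈ L, ∃ μ : ℂ, f v = μ • v := by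
  induction L with
  | nil =>
    intro W hW _
    obtain ⟨v, hv, hv0⟩ := Submodule.exists_mem_ne_zero_of_ne_bot hW
    exact ⟨v, hv, hv0, by simp⟩
  | cons f t ih =>
    intro W hW hinv
    haveI : Nontrivial W := Submodule.nontrivial_iff_ne_bot.2 hW
    have hfW : ∀ v ∈ W, f v ∈ W := hinv f (List.mem_cons_self)
    obtain ⟨μ, hμ⟩ := Module.End.exists_eigenvalue (f.restrict hfW)
    obtain ⟨w, hw, hw0⟩ := hμ.exists_hasEigenvector
    have hweq : f (w : V) = μ • (w : V) := by
      have h1 : (f.restrict hfW) w = μ • w := Module.End.mem_eigenspace_iff.1 hw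
      have h2 : ((f.restrict hfW) w : V) = f (w : V) := rfl
      rw [← h2, h1]
      simp
    set W' : Submodule ℂ V := W ⊓ Module.End.eigenspace f μ with hW'
    have hwW' : (w : V) ∈ W' := Submodule.mem_inf.2 ⟨w.2, Module.End.mem_eigenspace_iff.2 hweq⟩
    have hW'0 : W' ≠ ⊥ := by
      intro hbot
      apply hw0
      have : (w : V) = 0 := by rw [hbot] at hwW'; simpa using hwW'
      exact Subtype.ext this
    have hinv' : ∀ g ∈ f :: t, ∀ v ∈ W', g v ∈ W' := by
      intro g hg v hv
      obtain ⟨hv1, hv2⟩ := Submodule.mem_inf.1 hv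
      refine Submodule.mem_inf.2 ⟨hinv g hg v hv1, Module.End.mem_eigenspace_iff.2 ?_⟩
      have h1 : f (g v) = g (f v) := by
        have h := LinearMap.congr_fun (hc f (List.mem_cons_self) g hg) v
        simpa [Module.End.mul_apply] using h
      rw [h1, Module.End.mem_eigenspace_iff.1 hv2, map_smul]
    obtain ⟨v, hvW', hv0, hval⟩ := ih
      (fun a ha b hb => hc a (List.mem_cons_of_mem f ha) b (List.mem_cons_of_mem f hb))
      W' hW'0 (fun g hg => hinv' g (List.mem_cons_of_mem f hg))
    obtain ⟨hv1, hv2⟩ := Submodule.mem_inf.1 hvW'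
    refine ⟨v, hv1, hv0, ?_⟩
    intro g hg
    rcases List.mem_cons.1 hg with h | h
    · exact ⟨μ, by rw [h]; exact Module.End.mem_eigenspace_iff.1 hv2⟩
    · exact hval g h


lemma cseq_closed (q ν γ c : ℂ) (n : ℕ) :
    cseq q ν γ c n = q ^ n * c + ν * q * (∑ i ∈ Finset.range n, q ^ i)
      - ν * γ * q ^ n * (∑ i ∈ Finset.range n, q ^ i) := by
  induction n with
  | zero => simp [cseq]
  | succ n ih =>
    rw [cseq, ih, geom_sum_succ]
    have hG := geom_sum_mul q n
    linear_combination (ν * γ * q ^ (n + 1)) * hG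

/-- Case (VI)(iii), classification: assume that for every character `η` of `Γ` with
`η|_Λ = ξ` the degree-`r` polynomial `P_η(c) = c₀·c₁·⋯·c_{r−1} − 1` (in the variable
`c = c₀`) has `r` distinct roots (recorded as: its root set is a finite set of
cardinality `r`). Then every irreducible case-VI representation is isomorphic, via a
linear isomorphism intertwining `X`, `Y` and every `ρ(h)`, to `L(η, c)` for some
character `η` with `η|_Λ = ξ` and some root `c` of `P_η`. -/
theorem caseVI_classification {Γ : Type*} [CommGroup Γ] [Fintype Γ] (g₁ g₂ : Γ)
    (χ₁ χ₂ : Γ →* ℂˣ) (hχ₂ : χ₂ = χ₁⁻¹) (h12 : χ₁ g₂ * χ₂ g₁ = 1)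
    (r : ℕ) (hr : 1 < r) (hord : orderOf χ₁ = r)
    (hq : IsPrimitiveRoot ((χ₁ g₁ : ℂˣ) : ℂ) r)
    (ν : ℂ) (hν : ν ≠ 0)
    (Λ : Subgroup Γ) (hΛ : ∀ g : Γ, g ∈ Λ ↔ (χ₁ g = 1 ∧ χ₂ g = 1)) (ξ : ↥Λ →* ℂˣ)
    (hroots : ∀ η : Γ →* ℂˣ, (∀ g : Λ, η (g : Γ) = ξ g) →
      ∃ S : Finset ℂ, S.card = r ∧ ∀ c : ℂ,
        (∏ i ∈ Finset.range r,
          cseq ((χ₁ g₁ : ℂˣ) : ℂ) ν ((η (g₁ * g₂) : ℂˣ) : ℂ) c i = 1) ↔ c ∈ S)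
    (V : Type*) [AddCommGroup V] [Module ℂ V] [FiniteDimensional ℂ V]
    (ρ : Γ → Module.End ℂ V) (X Y : Module.End ℂ V)
    (hrep : IsRepVI g₁ g₂ χ₁ χ₂ ν Λ ξ r ρ X Y) (hirr : Irred2 ρ X Y) :
    ∃ η : Γ →* ℂˣ, (∀ g : Λ, η (g : Γ) = ξ g) ∧
      ∃ c : ℂ, c ≠ 0 ∧
        (∏ i ∈ Finset.range r,
          cseq ((χ₁ g₁ : ℂˣ) : ℂ) ν ((η (g₁ * g₂) : ℂˣ) : ℂ) c i = 1) ∧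
        ∃ φ : V ≃ₗ[ℂ] (ZMod r → ℂ),
          (∀ v : V, φ (X v) = wX r (φ v)) ∧
          (∀ v : V, φ (Y v) =
            wY r (cseq ((χ₁ g₁ : ℂˣ) : ℂ) ν ((η (g₁ * g₂) : ℂˣ) : ℂ) c) (φ v)) ∧
          ∀ (h : Γ) (v : V), φ (ρ h v) = wRho r χ₁ η h (φ v) := by
  classical
  obtain ⟨⟨hmul, hone, hXc, hYc, hΛξ⟩, hXr, hYr, hrel⟩ := hrep
  obtain ⟨⟨v₁, hv₁⟩, hirr2⟩ := hirr
  haveI : NeZero r := ⟨by omega⟩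
  haveI : Fact (1 < r) := ⟨hr⟩
  set q : ℂ := ((χ₁ g₁ : ℂˣ) : ℂ) with hqdef
  have hq0 : q ≠ 0 := Units.ne_zero _
  have hq1 : q ≠ 1 := hq.ne_one hr
  have hqr : q ^ r = 1 := hq.pow_eq_one
  have hgeom : (∑ i ∈ Finset.range r, q ^ i) = 0 := by
    have h := geom_sum_mul q r
    rw [hqr, sub_self] at h
    exact (mul_eq_zero.1 h).resolve_right (sub_ne_zero.2 hq1)
  -- χ₁ g₂ = χ₁ g₁
  have hg2 : χ₁ g₂ = χ₁ g₁ := by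
    have h12' := h12
    rw [hχ₂, MonoidHom.inv_apply] at h12'
    exact mul_inv_eq_one.1 h12'
  have hq2 : ((χ₁ (g₁ * g₂) : ℂˣ) : ℂ) = q * q := by
    rw [map_mul, hg2, Units.val_mul]
  -- commuting family and common eigenvector
  have hχ₂val : ∀ h : Γ, ((χ₂ h : ℂˣ) : ℂ) = (((χ₁ h : ℂˣ) : ℂ))⁻¹ := by
    intro h; rw [hχ₂, MonoidHom.inv_apply]; simp
  have hTρ : ∀ h : Γ, ρ h * (Y * X) = (Y * X) * ρ h := by
    intro h
    have key : ρ h * (Y * X) = (((χ₂ h : ℂˣ) : ℂ) * ((χ₁ h : ℂˣ) : ℂ)) • (Y * (X * ρ h)) := by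
      rw [← mul_assoc, hYc h, smul_mul_assoc, mul_assoc, hXc h, mul_smul_comm, smul_smul]
    rw [key, hχ₂val h, inv_mul_cancel₀ (Units.ne_zero _), one_smul, mul_assoc]
  set L : List (Module.End ℂ V) := (Y * X) :: ((Finset.univ : Finset Γ).toList.map ρ) with hLdef
  have hmemρ : ∀ h : Γ, ρ h ∈ L :=
    fun h => List.mem_cons_of_mem _ (List.mem_map.2 ⟨h, Finset.mem_toList.2 (Finset.mem_univ h), rfl⟩)
  have hform : ∀ z ∈ L, z = Y * X ∨ ∃ h : Γ, z = ρ h := by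
    intro z hz
    rcases List.mem_cons.1 hz with h | h
    · exact Or.inl h
    · obtain ⟨a, -, rfl⟩ := List.mem_map.1 h
      exact Or.inr ⟨a, rfl⟩
  have hcomm : ∀ f ∈ L, ∀ g ∈ L, f * g = g * f := by
    intro f hf g hg
    rcases hform f hf with rfl | ⟨a, rfl⟩ <;> rcases hform g hg with rfl | ⟨b, rfl⟩
    · rfl
    · exact (hTρ b).symm
    · exact hTρ a
    · rw [← hmul, ← hmul, mul_comm a b]
  obtain ⟨v₀, -, hv₀, hscal⟩ := common_eig L hcomm ⊤
    (by rw [Submodule.ne_bot_iff]; exact ⟨v₁, Submodule.mem_top, hv₁⟩)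
    (fun _ _ _ _ => Submodule.mem_top)
  have huniq : ∀ a b : ℂ, a • v₀ = b • v₀ → a = b := by
    intro a b hab
    by_contra hne
    have h0 : (a - b) • v₀ = 0 := by rw [sub_smul, hab, sub_self]
    rcases smul_eq_zero.1 h0 with h | h
    · exact hne (sub_eq_zero.1 h)
    · exact hv₀ h
  obtain ⟨lam, hlam⟩ := hscal (Y * X) List.mem_cons_self
  have hscal2 : ∀ h : Γ, ∃ μ : ℂ, ρ h v₀ = μ • v₀ := fun h => hscal (ρ h) (hmemρ h)
  choose η₀ hη₀ using hscal2
  have hη₀1 : η₀ 1 = 1 := by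
    apply huniq
    rw [← hη₀ 1, hone, one_smul, Module.End.one_apply]
  have hη₀mul : ∀ a b : Γ, η₀ (a * b) = η₀ a * η₀ b := by
    intro a b
    apply huniq
    rw [← hη₀ (a * b), hmul, Module.End.mul_apply, hη₀ b, map_smul, hη₀ a, smul_smul,
      mul_comm (η₀ b) (η₀ a)]
  have hη₀ne : ∀ h : Γ, η₀ h ≠ 0 := by
    intro h
    have h1 : η₀ h * η₀ h⁻¹ = 1 := by rw [← hη₀mul, mul_inv_cancel, hη₀1]
    exact left_ne_zero_of_mul_eq_one h1
  set η : Γ →* ℂˣ := MonoidHom.mk' (fun h => Units.mk0 (η₀ h) (hη₀ne h))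
    (fun a b => Units.ext (by simp [hη₀mul])) with hηdef
  have hηval : ∀ h : Γ, ((η h : ℂˣ) : ℂ) = η₀ h := fun h => rfl
  have hηΛ : ∀ g : Λ, η (g : Γ) = ξ g := by
    intro g
    refine Units.ext ?_
    rw [hηval]
    apply huniq
    rw [← hη₀ (g : Γ), hΛξ g, LinearMap.smul_apply, Module.End.one_apply]
  set γ : ℂ := η₀ (g₁ * g₂) with hγdef
  set c₀ : ℂ := q⁻¹ * lam - ν + ν * γ with hc₀def
  set cs : ℕ → ℂ := cseq q ν γ c₀ with hcsdef
  -- the vectors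
  set f : ℕ → V := fun n => (X ^ n) v₀ with hfdef
  have hf0 : f 0 = v₀ := by simp [hfdef]
  have hfs : ∀ n, f (n + 1) = X (f n) := by
    intro n; simp [hfdef, pow_succ', Module.End.mul_apply]
  have hfp : ∀ n, f (n + r) = f n := by
    intro n; simp [hfdef, pow_add, hXr, Module.End.mul_apply]
  have hfr : f r = v₀ := by have := hfp 0; rw [zero_add] at this; rw [this, hf0]
  have hXinj : Function.Injective X := by
    have hXleft : (X ^ (r - 1)) * X = 1 := by
      rw [← pow_succ, Nat.sub_add_cancel (le_of_lt hr)]; exact hXr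
    intro a b hab
    have h1 : (X ^ (r - 1)) (X a) = (X ^ (r - 1)) (X b) := by rw [hab]
    rw [← Module.End.mul_apply, ← Module.End.mul_apply, hXleft] at h1
    simpa using h1
  have hfne : ∀ n, f n ≠ 0 := by
    intro n; induction n with
    | zero => rw [hf0]; exact hv₀
    | succ n ih =>
      rw [hfs]
      intro h
      exact ih (hXinj (h.trans (map_zero X).symm))
  have hρf : ∀ (h : Γ) (n : ℕ), ρ h (f n) = (η₀ h * ((χ₁ h : ℂˣ) : ℂ) ^ n) • f n := by
    intro h n; induction n with
    | zero => rw [hf0]; simpa using hη₀ h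
    | succ n ih =>
      rw [hfs]
      have hc := LinearMap.congr_fun (hXc h) (f n)
      simp only [Module.End.mul_apply, LinearMap.smul_apply] at hc
      rw [hc, ih, map_smul, smul_smul]
      congr 1
      ring
  -- the key Y computation
  have hYf : ∀ n, Y (f (n + 1)) = cs (n + 1) • f n := by
    intro n; induction n with
    | zero =>
      have hc1 : cs (0 + 1) = lam := by
        show q * (c₀ + ν - ν * q ^ (2 * 0) * γ) = lam
        rw [hc₀def]
        field_simp
        ring
      rw [hfs, hf0, ← Module.End.mul_apply, hlam, hc1]
    | succ n ih =>
      have e1 : X (Y (f (n + 1))) = cs (n + 1) • f (n + 1) := by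
        rw [ih, map_smul, ← hfs]
      have e2 : ρ (g₁ * g₂) (f (n + 1)) = (γ * (q * q) ^ (n + 1)) • f (n + 1) := by
        rw [hρf (g₁ * g₂) (n + 1), hq2, ← hγdef]
      have e3 := LinearMap.congr_fun hrel (f (n + 1))
      simp only [Module.End.mul_apply, LinearMap.add_apply, LinearMap.smul_apply,
        LinearMap.sub_apply, Module.End.one_apply] at e3
      rw [e1, e2, ← hfs] at e3
      have e4 : Y (f (n + 1 + 1)) =
          q • (cs (n + 1) • f (n + 1) - ν • ((γ * (q * q) ^ (n + 1)) • f (n + 1) - f (n + 1))) := by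
        rw [e3, add_sub_cancel_right, smul_smul, mul_inv_cancel₀ hq0, one_smul]
      rw [e4]
      have hcs2 : cs (n + 1 + 1) = q * (cs (n + 1) + ν - ν * q ^ (2 * (n + 1)) * γ) := rfl
      rw [hcs2]
      have hpow : (q * q) ^ (n + 1) = q ^ (2 * (n + 1)) := by
        rw [pow_mul, pow_two]
      rw [hpow]
      module
  have hcsr : cs r = cs 0 := by
    show cseq q ν γ c₀ r = c₀
    rw [cseq_closed, hqr, hgeom]
    ring
  have hY0 : Y (f 0) = cs 0 • f (r - 1) := by
    have h1 : r - 1 + 1 = r := Nat.sub_add_cancel (le_of_lt hr)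
    have h2 := hYf (r - 1)
    rw [h1, hfr, ← hf0, hcsr] at h2
    exact h2
  -- product of the c_i equals 1
  have hYk : ∀ k, k ≤ r → (Y ^ k) (f r) = (∏ j ∈ Finset.range k, cs (r - j)) • f (r - k) := by
    intro k
    induction k with
    | zero => intro _; simp
    | succ k ih =>
      intro hk
      have hk' : k < r := hk
      rw [pow_succ', Module.End.mul_apply, ih (le_of_lt hk'), map_smul]
      have hrk : r - k = (r - (k + 1)) + 1 := by omega
      rw [hrk, hYf (r - (k + 1)), smul_smul, Finset.prod_range_succ]
      congr 1
      rw [← hrk]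
  have hprod1 : (∏ j ∈ Finset.range r, cs (r - j)) = 1 := by
    have h := hYk r le_rfl
    rw [hYr, Module.End.one_apply, Nat.sub_self, hf0, hfr] at h
    exact (huniq 1 _ (by rw [one_smul]; exact h)).symm
  have hprod2 : (∏ j ∈ Finset.range r, cs (j + 1)) = 1 := by
    rw [← hprod1, ← Finset.prod_range_reflect]
    apply Finset.prod_congr rfl
    intro j hj
    have hj' : j < r := Finset.mem_range.1 hj
    congr 1
    omega
  have hcne : ∀ j ∈ Finset.range r, cs (j + 1) ≠ 0 := by
    intro j hj h0
    rw [Finset.prod_eq_zero hj h0] at hprod2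
    exact one_ne_zero hprod2.symm
  have hc0ne : cs 0 ≠ 0 := by
    have h := hcne (r - 1) (Finset.mem_range.2 (by omega))
    rw [Nat.sub_add_cancel (by omega), hcsr] at h
    exact h
  have hprod0 : (∏ i ∈ Finset.range r, cs i) = 1 := by
    have h1 : (∏ j ∈ Finset.range r, cs (j + 1)) * cs 0 = (∏ i ∈ Finset.range r, cs i) * cs r := by
      rw [← Finset.prod_range_succ', Finset.prod_range_succ]
    rw [hprod2, one_mul, hcsr] at h1
    exact mul_right_cancel₀ hc0ne (by rw [one_mul, ← h1])
  -- the spanning submodule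
  have hfadd : ∀ m k, f (m + r * k) = f m := by
    intro m k
    induction k with
    | zero => simp
    | succ k ih => rw [Nat.mul_succ, ← add_assoc, hfp, ih]
  have hfmod : ∀ n, f n = f (n % r) := by
    intro n
    conv_lhs => rw [← Nat.mod_add_div n r]
    exact hfadd _ _
  set S : Set V := Set.range (fun i : ZMod r => f i.val) with hSdef
  have hmemS : ∀ n : ℕ, n < r → f n ∈ S := fun n hn => ⟨(n : ZMod r), by simp [ZMod.val_cast_of_lt hn]⟩
  set W : Submodule ℂ V := Submodule.span ℂ S with hWdef
  have hstabX : ∀ v ∈ W, X v ∈ W := by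
    intro v hv
    have hle : Submodule.map X W ≤ W := by
      rw [hWdef, Submodule.map_span_le]
      rintro s ⟨i, rfl⟩
      rw [← hfs, hfmod (i.val + 1)]
      exact Submodule.subset_span (hmemS _ (Nat.mod_lt _ (by omega)))
    exact hle (Submodule.mem_map_of_mem hv)
  have hstabY : ∀ v ∈ W, Y v ∈ W := by
    intro v hv
    have hle : Submodule.map Y W ≤ W := by
      rw [hWdef, Submodule.map_span_le]
      rintro s ⟨i, rfl⟩
      show Y (f i.val) ∈ Submodule.span ℂ S
      rcases Nat.eq_zero_or_pos i.val with h0 | hpos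
      · rw [h0, hY0]
        exact Submodule.smul_mem _ _ (Submodule.subset_span (hmemS _ (by omega)))
      · obtain ⟨m, hm⟩ : ∃ m, i.val = m + 1 := ⟨i.val - 1, by omega⟩
        have hmr : m < r := by have := ZMod.val_lt i; omega
        rw [hm, hYf m]
        exact Submodule.smul_mem _ _ (Submodule.subset_span (hmemS m hmr))
    exact hle (Submodule.mem_map_of_mem hv)
  have hstabρ : ∀ (h : Γ), ∀ v ∈ W, ρ h v ∈ W := by
    intro h v hv
    have hle : Submodule.map (ρ h) W ≤ W := by
      rw [hWdef, Submodule.map_span_le]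
      rintro s ⟨i, rfl⟩
      show (ρ h) (f i.val) ∈ Submodule.span ℂ S
      rw [hρf]
      exact Submodule.smul_mem _ _ (Submodule.subset_span ⟨i, rfl⟩)
    exact hle (Submodule.mem_map_of_mem hv)
  have hWne : W ≠ ⊥ := by
    rw [Submodule.ne_bot_iff]
    refine ⟨v₀, ?_, hv₀⟩
    rw [← hf0]
    exact Submodule.subset_span (hmemS 0 (by omega))
  -- linear independence
  have hli : LinearIndependent ℂ (fun i : ZMod r => f i.val) := by
    apply Module.End.eigenvectors_linearIndependent' (ρ g₁) (fun i : ZMod r => η₀ g₁ * q ^ i.val)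
    · intro i j hij
      have hpow : q ^ (i.val) = q ^ (j.val) := mul_left_cancel₀ (hη₀ne g₁) hij
      exact ZMod.val_injective r (hq.pow_inj (ZMod.val_lt i) (ZMod.val_lt j) hpow)
    · intro i
      exact ⟨Module.End.mem_eigenspace_iff.2 (hρf g₁ i.val), hfne i.val⟩
  have hWtop : W = ⊤ := (hirr2 W ⟨hstabX, hstabY, hstabρ⟩).resolve_left hWne
  have hspan : ⊤ ≤ Submodule.span ℂ (Set.range (fun i : ZMod r => f i.val)) := by
    rw [← hSdef, ← hWdef, hWtop]
  let b : Module.Basis (ZMod r) ℂ V := Module.Basis.mk hli hspan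
  have hbi : ∀ i : ZMod r, b i = f i.val := fun i => Module.Basis.mk_apply hli hspan i
  have hnatval : ∀ i : ZMod r, ((i.val : ℕ) : ZMod r) = i := fun i => ZMod.natCast_rightInverse i
  have hXb : ∀ i : ZMod r, X (b i) = b (i + 1) := by
    intro i
    rw [hbi, hbi, ← hfs, hfmod (i.val + 1)]
    congr 1
    rw [ZMod.val_add, ZMod.val_one]
  have hYb : ∀ i : ZMod r, Y (b i) = cs i.val • b (i - 1) := by
    intro i
    rcases Nat.eq_zero_or_pos i.val with h0 | hpos
    · have hi : i = 0 := by rw [← hnatval i, h0]; simp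
      have hvm : ((0 - 1 : ZMod r)).val = r - 1 := by
        have h1 : (0 - 1 : ZMod r) = ((r - 1 : ℕ) : ZMod r) := by
          rw [Nat.cast_sub (by omega : 1 ≤ r), ZMod.natCast_self]
          ring
        rw [h1, ZMod.val_cast_of_lt (by omega)]
      rw [hi, hbi, hbi, ZMod.val_zero, hvm]
      exact hY0
    · obtain ⟨m, hm⟩ : ∃ m, i.val = m + 1 := ⟨i.val - 1, by omega⟩
      have hmr : m < r := by have := ZMod.val_lt i; omega
      have hi1 : i - 1 = (m : ZMod r) := by
        rw [← hnatval i, hm]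
        push_cast
        ring
      rw [hbi, hbi, hm, hi1, ZMod.val_cast_of_lt hmr]
      exact hYf m
  have hρb : ∀ (h : Γ) (i : ZMod r), ρ h (b i) = (η₀ h * ((χ₁ h : ℂˣ) : ℂ) ^ i.val) • b i := by
    intro h i; rw [hbi]; exact hρf h i.val
  -- intertwiners
  have hXw : ∀ v : V, b.equivFun (X v) = wX r (b.equivFun v) := by
    have key : (b.equivFun.toLinearMap ∘ₗ X) = (wX r) ∘ₗ b.equivFun.toLinearMap := by
      apply b.ext
      intro i
      simp only [LinearMap.comp_apply, LinearEquiv.coe_coe]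
      rw [hXb i]
      funext j
      simp only [wX, LinearMap.coe_mk, AddHom.coe_mk, Module.Basis.equivFun_self]
      simp only [eq_sub_iff_add_eq]
    exact fun v => LinearMap.congr_fun key v
  have hYw : ∀ v : V, b.equivFun (Y v) = wY r cs (b.equivFun v) := by
    have key : (b.equivFun.toLinearMap ∘ₗ Y) = (wY r cs) ∘ₗ b.equivFun.toLinearMap := by
      apply b.ext
      intro i
      simp only [LinearMap.comp_apply, LinearEquiv.coe_coe]
      rw [hYb i, map_smul]
      funext j
      simp only [wY, LinearMap.coe_mk, AddHom.coe_mk, Pi.smul_apply, Module.Basis.equivFun_self,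
        smul_eq_mul]
      rcases eq_or_ne i (j + 1) with hij | hij
      · rw [hij]
        simp [add_sub_cancel_right]
      · have h2 : i - 1 ≠ j := fun hc => hij (by rw [← hc]; ring)
        simp [hij, h2]
    exact fun v => LinearMap.congr_fun key v
  have hρw : ∀ (h : Γ) (v : V), b.equivFun (ρ h v) = wRho r χ₁ η h (b.equivFun v) := by
    intro h
    have key : (b.equivFun.toLinearMap ∘ₗ (ρ h)) = (wRho r χ₁ η h) ∘ₗ b.equivFun.toLinearMap := by
      apply b.ext
      intro i
      simp only [LinearMap.comp_apply, LinearEquiv.coe_coe]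
      rw [hρb h i, map_smul]
      funext j
      simp only [wRho, LinearMap.coe_mk, AddHom.coe_mk, Pi.smul_apply, Module.Basis.equivFun_self,
        smul_eq_mul, hηval]
      rcases eq_or_ne i j with rfl | hij
      · simp [mul_assoc]
      · simp [hij]
    exact fun v => LinearMap.congr_fun key v
  -- conclusion
  refine ⟨η, hηΛ, c₀, hc0ne, ?_, b.equivFun, ?_, ?_, ?_⟩
  · simp only [hηval]
    exact hprod0
  · exact hXw
  · exact hYw
  · exact hρw
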